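/- Let κ = 3. For every configuration X_0 : ℤ → ℤ/3ℤ, every integer x', and every n ≥ 0, the walks S'_n and 𝒮_n defined from X_0 with starting value x' satisfy 𝒮_n = S'_n + 1{X⃗_0(n) = (1,2,0)} − 2·1{X⃗_0(n) = (0,2,1)}. -/

import Mathlib

noncomputable section

namespace FCA3

/-- The representative of an element of `ℤ/3ℤ` in `{-1, 0, 1}`. -/
def rep3 (a : ZMod 3) : ℤ := if a = 0 then 0 else if a = 1 then 1 else -1

/-- The triple of colors around site `x`. -/
def vec (X : ℤ → ZMod 3) (x : ℤ) : ZMod 3 × ZMod 3 × ZMod 3 := (X (x - 1), X x, X (x + 1))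

/-- The modified configuration `X₀'`, in which every flipping triple `120` or `021`
centered at `x` is replaced by color `1` at `x`. -/
def modify (X : ℤ → ZMod 3) : ℤ → ZMod 3 := fun x =>
  if vec X x = ((1 : ZMod 3), (2 : ZMod 3), (0 : ZMod 3)) ∨
     vec X x = ((0 : ZMod 3), (2 : ZMod 3), (1 : ZMod 3)) then 1 else X x

/-- The functional `g : (ℤ/3ℤ)³ → {-2,…,2}`, with `g(1,2,0) = -2`, `g(0,2,1) = 2`, and
otherwise the representative of `k - j (mod 3)` in `{-1,0,1}`. -/
def g3 : ZMod 3 × ZMod 3 × ZMod 3 → ℤ := fun p =>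
  if p = ((1 : ZMod 3), (2 : ZMod 3), (0 : ZMod 3)) then -2
  else if p = ((0 : ZMod 3), (2 : ZMod 3), (1 : ZMod 3)) then 2
  else rep3 (p.2.2 - p.2.1)

/-- The walk `S'_n = x' + Σ_{i=0}^{n-1} dX₀'(i, i+1)`. -/
def S' (X : ℤ → ZMod 3) (x' : ℤ) (n : ℕ) : ℤ :=
  x' + ∑ i ∈ Finset.range n, rep3 (modify X ((i : ℤ) + 1) - modify X (i : ℤ))

/-- The starting value `𝒮₀ = x' + 1{X⃗₀(0) = (1,2,0)} - 2·1{X⃗₀(0) = (0,2,1)}`. -/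
def S0 (X : ℤ → ZMod 3) (x' : ℤ) : ℤ :=
  x' + (if vec X 0 = ((1 : ZMod 3), (2 : ZMod 3), (0 : ZMod 3)) then 1 else 0) -
    (if vec X 0 = ((0 : ZMod 3), (2 : ZMod 3), (1 : ZMod 3)) then 2 else 0)

/-- The walk `𝒮_n = 𝒮₀ + Σ_{i=0}^{n-1} g(X⃗₀(i))`. -/
def Scal (X : ℤ → ZMod 3) (x' : ℤ) (n : ℕ) : ℤ :=
  S0 X x' + ∑ i ∈ Finset.range n, g3 (vec X (i : ℤ))

/-- The adjusted walk `𝒮'_n = 𝒮_n + 1{𝒮_n = -1 and X⃗₀(n) = (0,2,1)}`. -/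
def Scal' (X : ℤ → ZMod 3) (x' : ℤ) (n : ℕ) : ℤ :=
  Scal X x' n +
    (if Scal X x' n = -1 ∧ vec X (n : ℤ) = ((0 : ZMod 3), (2 : ZMod 3), (1 : ZMod 3))
     then 1 else 0)

end FCA3

open FCA3

lemma step_aux (a b c d : ZMod 3) :
    g3 (a, b, c) =
      rep3 ((if (b, c, d) = ((1 : ZMod 3), (2 : ZMod 3), (0 : ZMod 3)) ∨
               (b, c, d) = ((0 : ZMod 3), (2 : ZMod 3), (1 : ZMod 3)) then 1 else c) -
            (if (a, b, c) = ((1 : ZMod 3), (2 : ZMod 3), (0 : ZMod 3)) ∨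
               (a, b, c) = ((0 : ZMod 3), (2 : ZMod 3), (1 : ZMod 3)) then 1 else b)) +
      (if (b, c, d) = ((1 : ZMod 3), (2 : ZMod 3), (0 : ZMod 3)) then 1 else 0) -
      (if (b, c, d) = ((0 : ZMod 3), (2 : ZMod 3), (1 : ZMod 3)) then 2 else 0) -
      (if (a, b, c) = ((1 : ZMod 3), (2 : ZMod 3), (0 : ZMod 3)) then 1 else 0) +
      (if (a, b, c) = ((0 : ZMod 3), (2 : ZMod 3), (1 : ZMod 3)) then 2 else 0) := by
  revert a b c d; decide

/-- For κ = 3, the walks `S'` and `𝒮` satisfy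
`𝒮_n = S'_n + 1{X⃗₀(n) = (1,2,0)} - 2·1{X⃗₀(n) = (0,2,1)}` for every configuration,
starting value, and `n ≥ 0`. -/
theorem walk_comparison (X : ℤ → ZMod 3) (x' : ℤ) (n : ℕ) :
    Scal X x' n = S' X x' n +
      (if vec X (n : ℤ) = ((1 : ZMod 3), (2 : ZMod 3), (0 : ZMod 3)) then 1 else 0) -
      (if vec X (n : ℤ) = ((0 : ZMod 3), (2 : ZMod 3), (1 : ZMod 3)) then 2 else 0) := by
  induction n with
  | zero =>
    simp [Scal, S', S0]
  | succ n ih =>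
    have hScal : Scal X x' (n + 1) = Scal X x' n + g3 (vec X (n : ℤ)) := by
      simp [Scal, Finset.sum_range_succ, add_assoc]
    have hS' : S' X x' (n + 1) = S' X x' n +
        rep3 (modify X ((n : ℤ) + 1) - modify X (n : ℤ)) := by
      simp [S', Finset.sum_range_succ, add_assoc]
    rw [hScal, hS', ih]
    have hv : vec X (n : ℤ) = (X ((n : ℤ) - 1), X (n : ℤ), X ((n : ℤ) + 1)) := rfl
    have hv' : vec X ((n : ℕ) + 1 : ℤ) = (X (n : ℤ), X ((n : ℤ) + 1), X ((n : ℤ) + 1 + 1)) := by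
      simp [vec]
    have hm : modify X (n : ℤ) =
        (if vec X (n : ℤ) = ((1 : ZMod 3), (2 : ZMod 3), (0 : ZMod 3)) ∨
            vec X (n : ℤ) = ((0 : ZMod 3), (2 : ZMod 3), (1 : ZMod 3)) then 1
         else X (n : ℤ)) := rfl
    have hm' : modify X ((n : ℤ) + 1) =
        (if vec X ((n : ℤ) + 1) = ((1 : ZMod 3), (2 : ZMod 3), (0 : ZMod 3)) ∨
            vec X ((n : ℤ) + 1) = ((0 : ZMod 3), (2 : ZMod 3), (1 : ZMod 3)) then 1
         else X ((n : ℤ) + 1)) := rfl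
    have hveq : vec X ((n : ℤ) + 1) = (X (n : ℤ), X ((n : ℤ) + 1), X ((n : ℤ) + 1 + 1)) := by
      simp [vec]
    have key := step_aux (X ((n : ℤ) - 1)) (X (n : ℤ)) (X ((n : ℤ) + 1)) (X ((n : ℤ) + 1 + 1))
    push_cast
    rw [hm', hm, hveq, hv]
    linarith [key]
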